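/- Let H be a real Hilbert space and F : H → H be twice Fréchet differentiable with (F′(h)ξ, ξ) ≥ 0 for all h, ξ ∈ H and ‖F′(x)‖ ≤ N₁, ‖F″(x)‖ ≤ N₂ for all x ∈ H. Let ε : [0,∞) → (0,∞), z₀ ∈ H, and for each t let x(t) denote the unique solution of F(x) + ε(t)(x − z₀) = 0. Define Φ(h,t) := −[F′(h) + ε(t)I]^{-1}[F(h) + ε(t)(h − z₀)]. Then for all h ∈ H and t ≥ 0: (Φ(h,t), h − x(t)) ≤ −‖h − x(t)‖² + (N₂/(2ε(t)))·‖h − x(t)‖³. -/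

import Mathlib

open Set Filter
open scoped RealInnerProductSpace

/-- Second-order Taylor remainder bound: if `‖F''‖ ≤ N₂` everywhere, then
`‖F b - F a - F' a (b - a)‖ ≤ N₂ / 2 * ‖b - a‖ ^ 2`. -/
lemma taylor_half_aux {H : Type*} [NormedAddCommGroup H] [InnerProductSpace ℝ H]
    (F : H → H) (F' : H → H →L[ℝ] H) (F'' : H → H →L[ℝ] H →L[ℝ] H) (N₂ : ℝ)
    (hF' : ∀ x : H, HasFDerivAt F (F' x) x)
    (hF'' : ∀ x : H, HasFDerivAt F' (F'' x) x)
    (hN₂ : ∀ x : H, ‖F'' x‖ ≤ N₂) (a b : H) :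
    ‖F b - F a - F' a (b - a)‖ ≤ N₂ / 2 * ‖b - a‖ ^ 2 := by
  set v := b - a with hv
  have lip : ∀ y : H, ‖F' y - F' a‖ ≤ N₂ * ‖y - a‖ := fun y =>
    Convex.norm_image_sub_le_of_norm_hasFDerivWithin_le
      (fun z _ => (hF'' z).hasFDerivWithinAt) (fun z _ => hN₂ z) convex_univ
      (mem_univ a) (mem_univ y)
  set f : ℝ → H := fun s => F (a + s • v) - s • (F' a v) - F a with hfdef
  have hfd : ∀ s : ℝ, HasDerivAt f (F' (a + s • v) v - F' a v) s := by
    intro s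
    have h1 : HasDerivAt (fun s : ℝ => a + s • v) v s := by
      simpa using ((hasDerivAt_id s).smul_const v).const_add a
    have h2 : HasDerivAt (fun s : ℝ => F (a + s • v)) (F' (a + s • v) v) s :=
      (hF' (a + s • v)).comp_hasDerivAt s h1
    have h3 : HasDerivAt (fun s : ℝ => s • (F' a v)) (F' a v) s := by
      simpa using (hasDerivAt_id s).smul_const (F' a v)
    simpa [hfdef] using (h2.sub h3).sub_const (F a)
  have hB : ∀ s : ℝ, HasDerivAt (fun s : ℝ => N₂ * ‖v‖ ^ 2 * (s ^ 2 / 2))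
      (N₂ * ‖v‖ ^ 2 * s) s := by
    intro s
    have := ((hasDerivAt_pow 2 s).div_const 2).const_mul (N₂ * ‖v‖ ^ 2)
    refine this.congr_deriv ?_
    ring
  have bound : ∀ s ∈ Ico (0 : ℝ) 1, ‖F' (a + s • v) v - F' a v‖ ≤ N₂ * ‖v‖ ^ 2 * s := by
    intro s hs
    have h1 : ‖F' (a + s • v) v - F' a v‖ ≤ ‖F' (a + s • v) - F' a‖ * ‖v‖ := by
      simpa using (F' (a + s • v) - F' a).le_opNorm v
    have h2 : ‖F' (a + s • v) - F' a‖ ≤ N₂ * (s * ‖v‖) := by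
      have := lip (a + s • v)
      simpa [norm_smul, abs_of_nonneg hs.1] using this
    calc ‖F' (a + s • v) v - F' a v‖ ≤ ‖F' (a + s • v) - F' a‖ * ‖v‖ := h1
      _ ≤ N₂ * (s * ‖v‖) * ‖v‖ := by
          exact mul_le_mul_of_nonneg_right h2 (norm_nonneg v)
      _ = N₂ * ‖v‖ ^ 2 * s := by ring
  have hcont : ContinuousOn f (Icc (0 : ℝ) 1) :=
    fun s _ => (hfd s).continuousAt.continuousWithinAt
  have ha : ‖f 0‖ ≤ N₂ * ‖v‖ ^ 2 * ((0 : ℝ) ^ 2 / 2) := by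
    simp [hfdef]
  have key := image_norm_le_of_norm_deriv_right_le_deriv_boundary hcont
    (fun s _ => (hfd s).hasDerivWithinAt) ha hB bound
    (right_mem_Icc.mpr zero_le_one)
  have hf1 : f 1 = F b - F a - F' a (b - a) := by
    simp [hfdef, hv]
    abel
  rw [hf1] at key
  calc ‖F b - F a - F' a (b - a)‖ ≤ N₂ * ‖v‖ ^ 2 * ((1 : ℝ) ^ 2 / 2) := key
    _ = N₂ / 2 * ‖b - a‖ ^ 2 := by rw [hv]; ring

/-- A coercive continuous linear operator on a real Hilbert space is a unit. -/
lemma isUnit_of_coercive {H : Type*} [NormedAddCommGroup H] [InnerProductSpace ℝ H]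
    [CompleteSpace H] (A : H →L[ℝ] H) (c : ℝ) (hc : 0 < c)
    (hA : ∀ u : H, c * ‖u‖ * ‖u‖ ≤ ⟪A u, u⟫) : IsUnit A := by
  have hcoer : IsCoercive ((innerSL ℝ).comp A) := ⟨c, hc, fun u => hA u⟩
  have hEA : (hcoer.continuousLinearEquivOfBilin : H →L[ℝ] H) = A := by
    ext v
    apply ext_inner_right ℝ
    intro w
    exact (hcoer.continuousLinearEquivOfBilin_apply v w)
  exact ⟨hcoer.continuousLinearEquivOfBilin.toUnit, hEA⟩

/-- **Key estimate for the regularized continuous Newton method.**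
Let `H` be a real Hilbert space, `F : H → H` twice Fréchet differentiable with
`⟪F′(h) ξ, ξ⟫ ≥ 0` and `‖F′(x)‖ ≤ N₁`, `‖F″(x)‖ ≤ N₂`.  Let `ε : [0,∞) → (0,∞)`, `z₀ ∈ H`,
and for each `t` let `x t` denote the (unique) solution of `F x + ε t (x − z₀) = 0`.
Define `Φ(h,t) := −[F′(h) + ε t I]⁻¹ [F h + ε t (h − z₀)]`.  Then for all `h ∈ H`, `t ≥ 0`:
`⟪Φ(h,t), h − x t⟫ ≤ −‖h − x t‖² + (N₂ / (2 ε t)) ‖h − x t‖³`. -/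
theorem newton_regularized_key_estimate
    {H : Type*} [NormedAddCommGroup H] [InnerProductSpace ℝ H] [CompleteSpace H]
    (F : H → H) (F' : H → H →L[ℝ] H) (F'' : H → H →L[ℝ] H →L[ℝ] H) (N₁ N₂ : ℝ)
    (hF' : ∀ x : H, HasFDerivAt F (F' x) x)
    (hF'' : ∀ x : H, HasFDerivAt F' (F'' x) x)
    (hpos : ∀ h ξ : H, 0 ≤ ⟪F' h ξ, ξ⟫)
    (hN₁ : ∀ x : H, ‖F' x‖ ≤ N₁)
    (hN₂ : ∀ x : H, ‖F'' x‖ ≤ N₂)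
    (ε : ℝ → ℝ) (hεpos : ∀ t ∈ Ici (0 : ℝ), 0 < ε t)
    (z₀ : H) (x : ℝ → H)
    (hx : ∀ t ∈ Ici (0 : ℝ), F (x t) + ε t • (x t - z₀) = 0) :
    ∀ h : H, ∀ t ∈ Ici (0 : ℝ),
      ⟪-(Ring.inverse (F' h + ε t • (1 : H →L[ℝ] H)) (F h + ε t • (h - z₀))), h - x t⟫ ≤
        -‖h - x t‖ ^ 2 + N₂ / (2 * ε t) * ‖h - x t‖ ^ 3 := by
  intro h t ht
  have hε : 0 < ε t := hεpos t ht
  set A : H →L[ℝ] H := F' h + ε t • (1 : H →L[ℝ] H) with hA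
  have hAapp : ∀ u : H, A u = F' h u + ε t • u := by
    intro u
    simp [hA]
  have hcoer : ∀ u : H, ε t * ‖u‖ * ‖u‖ ≤ ⟪A u, u⟫ := by
    intro u
    rw [hAapp]
    rw [inner_add_left, real_inner_smul_left, real_inner_self_eq_norm_mul_norm]
    nlinarith [hpos h u]
  have hu : IsUnit A := isUnit_of_coercive A (ε t) hε hcoer
  set g : H := F h + ε t • (h - z₀) with hg
  set w : H := Ring.inverse A g with hw
  have hAw : A w = g := by
    have h1 : A * Ring.inverse A = 1 := Ring.mul_inverse_cancel A hu
    calc A w = (A * Ring.inverse A) g := rfl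
      _ = g := by rw [h1]; simp
  set v : H := h - x t with hvdef
  set R : H := F (x t) - F h - F' h (x t - h) with hR
  have hRbound : ‖R‖ ≤ N₂ / 2 * ‖v‖ ^ 2 := by
    have := taylor_half_aux F F' F'' N₂ hF' hF'' hN₂ h (x t)
    rw [hR]
    calc ‖F (x t) - F h - F' h (x t - h)‖ ≤ N₂ / 2 * ‖x t - h‖ ^ 2 := this
      _ = N₂ / 2 * ‖v‖ ^ 2 := by rw [hvdef, norm_sub_rev]
  have hFx : F (x t) = ε t • (z₀ - x t) := by
    have := hx t ht
    have h2 : F (x t) = -(ε t • (x t - z₀)) := by linear_combination (norm := abel) this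
    rw [h2, ← smul_neg]
    congr 1
    abel
  have hAv : A v - g = R := by
    rw [hAapp, hR, hg, hvdef, hFx, map_sub, map_sub]
    module
  -- so A (v - w) = R
  have hAu : A (v - w) = R := by
    rw [map_sub, hAw, ← hAv]
  set u : H := v - w with hudef
  have hubound : ‖u‖ ≤ ‖R‖ / ε t := by
    have h1 : ε t * ‖u‖ * ‖u‖ ≤ ⟪R, u⟫ := by
      rw [← hAu]; exact hcoer u
    have h2 : ⟪R, u⟫ ≤ ‖R‖ * ‖u‖ := real_inner_le_norm R u
    rcases eq_or_lt_of_le (norm_nonneg u) with h3 | h3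
    · rw [← h3]; positivity
    · rw [le_div_iff₀ hε]; nlinarith
  have hRu : ‖u‖ ≤ N₂ / (2 * ε t) * ‖v‖ ^ 2 := by
    calc ‖u‖ ≤ ‖R‖ / ε t := hubound
      _ ≤ (N₂ / 2 * ‖v‖ ^ 2) / ε t := by gcongr
      _ = N₂ / (2 * ε t) * ‖v‖ ^ 2 := by field_simp
  -- final computation
  have hsplit : ⟪-w, v⟫ = -‖v‖ ^ 2 + ⟪u, v⟫ := by
    have : -w = u - v := by rw [hudef]; abel
    rw [this, inner_sub_left, real_inner_self_eq_norm_sq]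
    ring
  have hfin : ⟪u, v⟫ ≤ N₂ / (2 * ε t) * ‖v‖ ^ 3 := by
    calc ⟪u, v⟫ ≤ ‖u‖ * ‖v‖ := real_inner_le_norm u v
      _ ≤ (N₂ / (2 * ε t) * ‖v‖ ^ 2) * ‖v‖ :=
          mul_le_mul_of_nonneg_right hRu (norm_nonneg v)
      _ = N₂ / (2 * ε t) * ‖v‖ ^ 3 := by ring
  calc ⟪-w, v⟫ = -‖v‖ ^ 2 + ⟪u, v⟫ := hsplit
    _ ≤ -‖v‖ ^ 2 + N₂ / (2 * ε t) * ‖v‖ ^ 3 := by linarith
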